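/- Let X ~ Exp(λ) (mean λ) and, for 0 < P ≤ λ, let Y be defined via the joint construction Y = X − V where V ~ Exp(P) (mean P) is independent of Y, and Y has distribution f_Y(y) = (1 − P/λ)·(1/λ)e^{−y/λ} + (P/λ)·δ(y) on [0,∞). Then the resulting pair (X,Y) satisfies: (i) 0 ≤ Y ≤ X a.s., (ii) E[X − Y] = P, (iii) X ~ Exp(λ), and (iv) I(X;Y) = ln(λ/P). -/

import Mathlib

open MeasureTheory Real ProbabilityTheory
open scoped Classical

/-- Kullback–Leibler divergence (in nats), `+∞` unless `μ ≪ ν` and the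
log-likelihood ratio is integrable. -/
noncomputable def klDiv {α : Type*} [MeasurableSpace α] (μ ν : Measure α) : ENNReal :=
  if μ ≪ ν ∧ Integrable (llr μ ν) μ then ENNReal.ofReal (∫ x, llr μ ν x ∂μ) else ⊤

/-- Mutual information `I(X;Y)` as KL divergence between joint and product of marginals. -/
noncomputable def mutualInfo {Ω α β : Type*} [MeasurableSpace Ω] [MeasurableSpace α]
    [MeasurableSpace β] (μ : Measure Ω) (X : Ω → α) (Y : Ω → β) : ENNReal :=
  klDiv (μ.map (fun ω => (X ω, Y ω))) ((μ.map X).prod (μ.map Y))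


section ExpAuxSection
open Set Filter
open scoped ENNReal

namespace ExpAux

lemma expMeasure_def (r : ℝ) : expMeasure r = volume.withDensity (exponentialPDF r) := rfl

lemma measurable_expPDF (r : ℝ) : Measurable (exponentialPDF r) :=
  (measurable_exponentialPDFReal r).ennreal_ofReal

lemma expMeasure_Iic_zero {r : ℝ} (hr : 0 < r) : expMeasure r (Iic 0) = 0 := by
  rw [expMeasure_def, withDensity_apply _ measurableSet_Iic,
    lintegral_exponentialPDF_eq_antiDeriv hr 0]
  simp

lemma ae_pos {r : ℝ} (hr : 0 < r) : ∀ᵐ x ∂(expMeasure r), 0 < x := by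
  rw [ae_iff]
  refine measure_mono_null (fun x hx => ?_) (expMeasure_Iic_zero hr)
  simpa using hx

lemma lintegral_id {r : ℝ} (hr : 0 < r) :
    ∫⁻ x, ENNReal.ofReal x ∂(expMeasure r) = ENNReal.ofReal (1 / r) := by
  have hg : ∀ x : ℝ, exponentialPDF r x * ENNReal.ofReal x
      = ENNReal.ofReal ((Ioi (0:ℝ)).indicator
          (fun x => x ^ (1:ℝ) * rexp (-r * x ^ (1:ℝ)) * r) x) := by
    intro x
    rcases le_or_gt x 0 with hx | hx
    · rw [indicator_of_notMem (by simpa using hx.not_gt)]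
      rcases lt_or_eq_of_le hx with hx' | hx'
      · rw [exponentialPDF_of_neg hx']; simp
      · subst hx'; simp
    · rw [exponentialPDF_of_nonneg hx.le, indicator_of_mem (mem_Ioi.mpr hx),
        ← ENNReal.ofReal_mul (by positivity)]
      congr 1
      simp only [rpow_one]
      rw [neg_mul]
      ring
  simp_rw [expMeasure_def, lintegral_withDensity_eq_lintegral_mul _ (measurable_expPDF r)
    ENNReal.measurable_ofReal, Pi.mul_apply, hg]
  rw [← ofReal_integral_eq_lintegral_ofReal]
  · rw [integral_indicator measurableSet_Ioi]
    have h2 := integral_rpow_mul_exp_neg_mul_Ioi (by norm_num : (0:ℝ) < 2) hr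
    rw [Real.Gamma_two, mul_one] at h2
    have heq : ∫ x in Ioi (0:ℝ), x ^ (1:ℝ) * rexp (-r * x ^ (1:ℝ)) * r
        = (∫ t in Ioi (0:ℝ), t ^ ((2:ℝ) - 1) * rexp (-(r * t))) * r := by
      rw [integral_mul_const]
      congr 1
      refine setIntegral_congr_fun measurableSet_Ioi (fun x hx => ?_)
      rw [rpow_one, show (2:ℝ) - 1 = 1 by norm_num, rpow_one]
      ring_nf
    rw [heq, h2]
    rw [show ((1:ℝ)/r) ^ (2:ℝ) = (1/r)*(1/r) by
      rw [show (2:ℝ) = (1:ℝ)+1 by norm_num, rpow_add (by positivity), rpow_one]]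
    field_simp
  · rw [integrable_indicator_iff measurableSet_Ioi]
    exact (integrableOn_rpow_mul_exp_neg_mul_rpow (by norm_num) zero_lt_one hr).mul_const r
  · exact Eventually.of_forall fun x => indicator_nonneg
      (fun y hy => by have h0 : (0:ℝ) < y := hy; positivity) x

lemma integrable_id {r : ℝ} (hr : 0 < r) : Integrable (fun x : ℝ => x) (expMeasure r) := by
  haveI := isProbabilityMeasure_expMeasure hr
  refine ⟨aestronglyMeasurable_id, ?_⟩
  rw [hasFiniteIntegral_iff_norm]
  have h : ∀ᵐ x ∂(expMeasure r), ENNReal.ofReal ‖x‖ = ENNReal.ofReal x :=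
    (ae_pos hr).mono fun x hx => by rw [Real.norm_eq_abs, abs_of_pos hx]
  rw [lintegral_congr_ae h, lintegral_id hr]
  exact ENNReal.ofReal_lt_top

lemma integral_id {r : ℝ} (hr : 0 < r) : ∫ x, x ∂(expMeasure r) = 1 / r := by
  haveI := isProbabilityMeasure_expMeasure hr
  rw [integral_eq_lintegral_of_nonneg_ae ((ae_pos hr).mono fun x hx => hx.le)
    aestronglyMeasurable_id, lintegral_id hr, ENNReal.toReal_ofReal (by positivity)]



/-- withDensity commutes with map along a measurable embedding. -/
lemma withDensity_map_emb {α β : Type*} [MeasurableSpace α] [MeasurableSpace β]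
    {e : α → β} (he : MeasurableEmbedding e) (ρ : Measure α) (f : β → ℝ≥0∞) :
    (ρ.map e).withDensity f = (ρ.withDensity (fun x => f (e x))).map e := by
  ext s hs
  rw [withDensity_apply _ hs, Measure.restrict_map he.measurable hs,
    he.lintegral_map, Measure.map_apply he.measurable hs,
    withDensity_apply _ (he.measurable hs)]

/-- withDensity vs map along a measure-preserving measurable equivalence. -/
lemma withDensity_map_equiv {α : Type*} [MeasurableSpace α]
    (T : α ≃ᵐ α) {ρ : Measure α} (hT : ρ.map T = ρ) (h : α → ℝ≥0∞) :
    (ρ.withDensity h).map T = ρ.withDensity (fun x => h (T.symm x)) := by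
  have := withDensity_map_emb T.measurableEmbedding ρ (fun x => h (T.symm x))
  rw [hT] at this
  rw [this]
  congr 1
  ext x
  simp

lemma smul_prod {α β : Type*} [MeasurableSpace α] [MeasurableSpace β]
    (c : ℝ≥0∞) (μ : Measure α) (ν : Measure β) [SFinite ν] :
    (c • μ).prod ν = c • (μ.prod ν) := by
  ext s hs
  rw [Measure.smul_apply, Measure.prod_apply hs, Measure.prod_apply hs,
    lintegral_smul_measure, smul_eq_mul]

lemma prod_smul {α β : Type*} [MeasurableSpace α] [MeasurableSpace β]
    (c : ℝ≥0∞) (μ : Measure α) (ν : Measure β) [SFinite ν] :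
    μ.prod (c • ν) = c • (μ.prod ν) := by
  ext s hs
  rw [Measure.smul_apply, Measure.prod_apply hs, Measure.prod_apply hs, smul_eq_mul,
    ← lintegral_const_mul _ (measurable_measure_prodMk_left hs)]
  simp

/-- the shear-and-swap equivalence `(y, v) ↦ (y + v, y)`. -/
def T : (ℝ × ℝ) ≃ᵐ (ℝ × ℝ) where
  toEquiv :=
  { toFun := fun p => (p.1 + p.2, p.1)
    invFun := fun p => (p.2, p.1 - p.2)
    left_inv := fun p => by simp
    right_inv := fun p => by simp }
  measurable_toFun := (measurable_fst.add measurable_snd).prodMk measurable_fst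
  measurable_invFun := measurable_snd.prodMk (measurable_fst.sub measurable_snd)

lemma T_apply (p : ℝ × ℝ) : T p = (p.1 + p.2, p.1) := rfl
lemma T_symm_apply (p : ℝ × ℝ) : T.symm p = (p.2, p.1 - p.2) := rfl

lemma map_T_volume :
    ((volume : Measure ℝ).prod (volume : Measure ℝ)).map T
      = (volume : Measure ℝ).prod volume := by
  have h1 : MeasurePreserving (fun z : ℝ × ℝ => (z.1, z.1 + z.2))
      ((volume : Measure ℝ).prod volume) ((volume : Measure ℝ).prod volume) :=
    measurePreserving_prod_add volume volume
  have h2 : MeasurePreserving (Prod.swap : ℝ × ℝ → ℝ × ℝ)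
      ((volume : Measure ℝ).prod volume) ((volume : Measure ℝ).prod volume) :=
    Measure.measurePreserving_swap
  have h3 := h2.comp h1
  have : (Prod.swap ∘ fun z : ℝ × ℝ => (z.1, z.1 + z.2)) = (T : ℝ × ℝ → ℝ × ℝ) := by
    ext p <;> simp [T_apply]
  rw [← this]
  exact h3.map_eq

/-- product of withDensity measures: concrete version for exponential measures. -/
lemma prod_expMeasure {a b : ℝ} (ha : 0 < a) (hb : 0 < b) :
    (expMeasure a).prod (expMeasure b)
      = ((volume : Measure ℝ).prod volume).withDensity
          (fun p => exponentialPDF a p.1 * exponentialPDF b p.2) := by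
  haveI := isProbabilityMeasure_expMeasure ha
  haveI := isProbabilityMeasure_expMeasure hb
  apply Measure.prod_eq (μ := expMeasure a) (ν := expMeasure b)
  intro s t hs ht
  have h1 : Measurable (exponentialPDF a) := (measurable_exponentialPDFReal a).ennreal_ofReal
  have h2 : Measurable (exponentialPDF b) := (measurable_exponentialPDFReal b).ennreal_ofReal
  rw [withDensity_apply _ (hs.prod ht), ← Measure.prod_restrict,
    lintegral_prod_mul h1.aemeasurable h2.aemeasurable,
    expMeasure_def, expMeasure_def, withDensity_apply _ hs, withDensity_apply _ ht]


noncomputable def F (a b : ℝ) : ℝ × ℝ → ℝ := fun p =>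
  if 0 ≤ p.2 ∧ p.2 ≤ p.1 then (b / a) * rexp (a * p.1 - b * (p.1 - p.2)) else 0

noncomputable def fD (a b : ℝ) : ℝ × ℝ → ℝ≥0∞ := fun p => ENNReal.ofReal (F a b p)

lemma pdf_line {a b : ℝ} (ha : 0 < a) (hb : 0 < b) (x : ℝ) :
    exponentialPDF a x * fD a b (x, 0) = exponentialPDF b x := by
  rcases lt_or_ge x 0 with hx | hx
  · rw [exponentialPDF_of_neg hx, exponentialPDF_of_neg hx, zero_mul]
  · rw [exponentialPDF_of_nonneg hx, exponentialPDF_of_nonneg hx]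
    have hcond : (0:ℝ) ≤ (0:ℝ) ∧ (0:ℝ) ≤ x := ⟨le_rfl, hx⟩
    have hF : F a b (x, 0) = (b / a) * rexp (a * x - b * (x - 0)) := if_pos hcond
    rw [fD, hF, ← ENNReal.ofReal_mul (by positivity)]
    congr 1
    have : a * rexp (-(a * x)) * (b / a * rexp (a * x - b * (x - 0)))
        = (a * (b / a)) * (rexp (-(a * x)) * rexp (a * x - b * (x - 0))) := by ring
    rw [this, ← Real.exp_add, mul_div_cancel₀ b ha.ne']
    congr 1
    ring

lemma pdf_plane {a b : ℝ} (ha : 0 < a) (hb : 0 < b) (p : ℝ × ℝ) :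
    exponentialPDF a p.1 * exponentialPDF a p.2 * fD a b p
      = exponentialPDF a p.2 * exponentialPDF b (p.1 - p.2) := by
  obtain ⟨x, y⟩ := p
  by_cases h : 0 ≤ y ∧ y ≤ x
  · obtain ⟨hy, hyx⟩ := h
    have hx : 0 ≤ x := hy.trans hyx
    have hxy : 0 ≤ x - y := sub_nonneg.mpr hyx
    have hF : F a b (x, y) = (b / a) * rexp (a * x - b * (x - y)) := if_pos ⟨hy, hyx⟩
    rw [exponentialPDF_of_nonneg hx, exponentialPDF_of_nonneg hy,
      exponentialPDF_of_nonneg hxy, fD, hF,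
      ← ENNReal.ofReal_mul (by positivity), ← ENNReal.ofReal_mul (by positivity),
      ← ENNReal.ofReal_mul (by positivity)]
    congr 1
    have : a * rexp (-(a * x)) * (a * rexp (-(a * y))) * (b / a * rexp (a * x - b * (x - y)))
        = (a * (b / a)) * a * (rexp (-(a * x)) * rexp (a * x - b * (x - y)) * rexp (-(a * y))) := by
      ring
    rw [this, ← Real.exp_add, ← Real.exp_add, mul_div_cancel₀ b ha.ne']
    have h2 : -(a * x) + (a * x - b * (x - y)) + -(a * y) = -(a*y) + -(b * (x - y)) := by ring
    rw [h2, Real.exp_add]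
    ring
  · have hF : fD a b (x, y) = 0 := by
      rw [fD, F, if_neg h, ENNReal.ofReal_zero]
    rw [hF, mul_zero]
    rcases not_and_or.mp h with hy | hyx
    · rw [exponentialPDF_of_neg (show y < 0 by exact lt_of_not_ge hy), zero_mul]
    · rw [exponentialPDF_of_neg (show x - y < 0 by simpa [sub_neg] using lt_of_not_ge hyx),
        mul_zero]





lemma F_nonneg {a b : ℝ} (ha : 0 < a) (hb : 0 < b) (p : ℝ × ℝ) : 0 ≤ F a b p := by
  unfold F; split_ifs with h
  · positivity
  · exact le_rfl

lemma measurableSet_supp : MeasurableSet {p : ℝ × ℝ | 0 ≤ p.2 ∧ p.2 ≤ p.1} :=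
  (measurableSet_le measurable_const measurable_snd).inter
    (measurableSet_le measurable_snd measurable_fst)

lemma measurable_F (a b : ℝ) : Measurable (F a b) := by
  unfold F
  exact Measurable.ite measurableSet_supp
    (measurable_const.mul ((((measurable_fst.const_mul a).sub
      ((measurable_fst.sub measurable_snd).const_mul b))).exp)) measurable_const

lemma measurable_fD (a b : ℝ) : Measurable (fD a b) := (measurable_F a b).ennreal_ofReal




/-- the mixture law of `Y`. -/
noncomputable def mY (a b : ℝ) : Measure ℝ :=
  ENNReal.ofReal (a / b) • Measure.dirac (0 : ℝ)
    + ENNReal.ofReal (1 - a / b) • expMeasure a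

lemma mY_finite {a : ℝ} (ha : 0 < a) (b : ℝ) : IsFiniteMeasure (mY a b) := by
  haveI := isProbabilityMeasure_expMeasure ha
  constructor
  unfold mY
  simp only [Measure.add_apply, Measure.smul_apply, smul_eq_mul]
  refine ENNReal.add_lt_top.mpr ⟨?_, ?_⟩ <;>
    exact ENNReal.mul_lt_top ENNReal.ofReal_lt_top (measure_lt_top _ _)

/-- the key identity: joint law of `(Y+V, Y)` equals product-of-marginals with density `fD`. -/
lemma key {a b : ℝ} (ha : 0 < a) (hb : 0 < b) :
    ((mY a b).prod (expMeasure b)).map T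
      = ((expMeasure a).prod (mY a b)).withDensity (fD a b) := by
  haveI := isProbabilityMeasure_expMeasure ha
  haveI := isProbabilityMeasure_expMeasure hb
  have hTmeas : Measurable (T : ℝ × ℝ → ℝ × ℝ) := T.measurable
  haveI := mY_finite ha b
  unfold mY
  -- LHS
  rw [Measure.add_prod, smul_prod, smul_prod, Measure.map_add _ _ hTmeas,
    Measure.map_smul, Measure.map_smul]
  -- dirac piece of LHS
  have hL1 : (((Measure.dirac (0:ℝ)).prod (expMeasure b)).map T)
      = (expMeasure b).map (fun v : ℝ => (v, (0:ℝ))) := by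
    rw [Measure.dirac_prod, Measure.map_map hTmeas measurable_prodMk_left]
    congr 1
    funext v
    simp [T_apply]
  -- exponential piece of LHS
  have hL2 : (((expMeasure a).prod (expMeasure b)).map T)
      = ((volume : Measure ℝ).prod volume).withDensity
          (fun p => exponentialPDF a p.2 * exponentialPDF b (p.1 - p.2)) := by
    rw [prod_expMeasure ha hb, withDensity_map_equiv T map_T_volume]
    rfl
  rw [hL1, hL2]
  -- RHS
  rw [Measure.prod_add, prod_smul, prod_smul, withDensity_add_measure,
    withDensity_smul_measure, withDensity_smul_measure]
  -- dirac piece of RHS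
  have hR1 : ((expMeasure a).prod (Measure.dirac (0:ℝ))).withDensity (fD a b)
      = (expMeasure b).map (fun v : ℝ => (v, (0:ℝ))) := by
    rw [Measure.prod_dirac,
      withDensity_map_emb (measurableEmbedding_prod_mk_right (0:ℝ)) _ (fD a b)]
    congr 1
    have hg : Measurable (fun x : ℝ => fD a b (x, (0:ℝ))) :=
      (measurable_fD a b).comp measurable_prodMk_right
    rw [expMeasure_def a, expMeasure_def b, ← withDensity_mul _ (measurable_expPDF a) hg]
    congr 1
    funext x
    simp only [Pi.mul_apply]
    exact pdf_line ha hb x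
  -- exponential piece of RHS
  have hR2 : ((expMeasure a).prod (expMeasure a)).withDensity (fD a b)
      = ((volume : Measure ℝ).prod volume).withDensity
          (fun p => exponentialPDF a p.2 * exponentialPDF b (p.1 - p.2)) := by
    have hg : Measurable (fun p : ℝ × ℝ => exponentialPDF a p.1 * exponentialPDF a p.2) :=
      ((measurable_expPDF a).comp measurable_fst).mul ((measurable_expPDF a).comp measurable_snd)
    rw [prod_expMeasure ha ha, ← withDensity_mul _ hg (measurable_fD a b)]
    congr 1
    funext p
    simp only [Pi.mul_apply]
    exact pdf_plane ha hb p
  rw [hR1, hR2]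


-- inner integral lemma
lemma inner_one {a b : ℝ} (ha : 0 < a) (hab : a ≤ b) {x : ℝ} (hx : 0 < x) :
    ∫⁻ y, fD a b (x, y) ∂(mY a b) = 1 := by
  have hb : 0 < b := ha.trans_le hab
  haveI := isProbabilityMeasure_expMeasure ha
  have hmeas : Measurable (fun y : ℝ => fD a b (x, y)) :=
    (measurable_fD a b).comp measurable_prodMk_left
  rw [mY, lintegral_add_measure, lintegral_smul_measure, lintegral_smul_measure,
    lintegral_dirac' _ hmeas]
  -- the exponential part
  have hexp : ∫⁻ y, fD a b (x, y) ∂(expMeasure a)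
      = ENNReal.ofReal (b * rexp ((a - b) * x) * ∫ y in (0:ℝ)..x, rexp ((b - a) * y)) := by
    rw [expMeasure_def, lintegral_withDensity_eq_lintegral_mul _ (measurable_expPDF a) hmeas]
    have hpt : ∀ y : ℝ, (exponentialPDF a * fun y => fD a b (x, y)) y
        = ENNReal.ofReal ((Icc (0:ℝ) x).indicator
            (fun y => b * rexp ((a - b) * x) * rexp ((b - a) * y)) y) := by
      intro y
      simp only [Pi.mul_apply]
      by_cases hy : y ∈ Icc (0:ℝ) x
      · obtain ⟨hy0, hyx⟩ := hy
        rw [indicator_of_mem (mem_Icc.mpr ⟨hy0, hyx⟩), exponentialPDF_of_nonneg hy0, fD,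
          F, if_pos (show 0 ≤ y ∧ y ≤ x from ⟨hy0, hyx⟩), ← ENNReal.ofReal_mul (by positivity)]
        congr 1
        have : a * rexp (-(a * y)) * (b / a * rexp (a * x - b * (x - y)))
            = (a * (b / a)) * (rexp (-(a * y)) * rexp (a * x - b * (x - y))) := by ring
        rw [this, ← Real.exp_add, mul_div_cancel₀ b ha.ne',
          show -(a * y) + (a * x - b * (x - y)) = (a - b) * x + (b - a) * y by ring,
          Real.exp_add]
        ring
      · rw [indicator_of_notMem hy, ENNReal.ofReal_zero]
        rcases not_and_or.mp hy with hy0 | hyx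
        · rw [exponentialPDF_of_neg (lt_of_not_ge hy0), zero_mul]
        · rw [fD, F, if_neg (fun hc => hyx hc.2), ENNReal.ofReal_zero, mul_zero]
    simp_rw [hpt]
    rw [← ofReal_integral_eq_lintegral_ofReal]
    · rw [integral_indicator measurableSet_Icc, integral_Icc_eq_integral_Ioc,
        ← intervalIntegral.integral_of_le hx.le, intervalIntegral.integral_const_mul]
    · rw [integrable_indicator_iff measurableSet_Icc]
      exact (Continuous.integrableOn_Icc (by continuity))
    · exact Eventually.of_forall fun y =>
        indicator_nonneg (fun z hz => by positivity) y
  rw [hexp]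
  -- compute the interval integral
  have hI : (b - a) * ∫ y in (0:ℝ)..x, rexp ((b - a) * y) = rexp ((b - a) * x) - 1 := by
    by_cases hc : b - a = 0
    · rw [hc, zero_mul, zero_mul, Real.exp_zero, sub_self]
    · have : ∀ y : ℝ, rexp ((b - a) * y) = rexp (y * (b - a)) := fun y => by rw [mul_comm]
      simp_rw [this]
      rw [intervalIntegral.integral_comp_mul_right (fun z => rexp z) hc, zero_mul,
        integral_exp, Real.exp_zero, smul_eq_mul, mul_comm]
      field_simp
  -- the value of `fD` at `(x, 0)`
  have hfd0 : fD a b (x, 0) = ENNReal.ofReal (b / a * rexp ((a - b) * x)) := by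
    rw [fD, F, if_pos ⟨le_rfl, hx.le⟩]
    congr 2
    ring
  rw [hfd0]
  -- assemble
  have e1 : ENNReal.ofReal (a / b) * ENNReal.ofReal (b / a * rexp ((a - b) * x))
      = ENNReal.ofReal (rexp ((a - b) * x)) := by
    rw [← ENNReal.ofReal_mul (by positivity)]
    congr 1
    field_simp
  have hInn : 0 ≤ ∫ y in (0:ℝ)..x, rexp ((b - a) * y) :=
    intervalIntegral.integral_nonneg hx.le (fun y _ => (Real.exp_pos _).le)
  have e2 : ENNReal.ofReal (1 - a / b) * ENNReal.ofReal
        (b * rexp ((a - b) * x) * ∫ y in (0:ℝ)..x, rexp ((b - a) * y))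
      = ENNReal.ofReal (1 - rexp ((a - b) * x)) := by
    have h1 : (0:ℝ) ≤ 1 - a / b := by
      rw [sub_nonneg, div_le_one hb]; exact hab
    rw [← ENNReal.ofReal_mul h1]
    congr 1
    have hba : (1 - a / b) * b = b - a := by field_simp
    have hthis : (1 - a / b) * (b * rexp ((a - b) * x) * ∫ y in (0:ℝ)..x, rexp ((b - a) * y))
        = rexp ((a - b) * x) * ((b - a) * ∫ y in (0:ℝ)..x, rexp ((b - a) * y)) := by
      calc (1 - a / b) * (b * rexp ((a - b) * x) * ∫ y in (0:ℝ)..x, rexp ((b - a) * y))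
          = ((1 - a / b) * b) * (rexp ((a - b) * x) * ∫ y in (0:ℝ)..x, rexp ((b - a) * y)) := by
            ring
        _ = (b - a) * (rexp ((a - b) * x) * ∫ y in (0:ℝ)..x, rexp ((b - a) * y)) := by rw [hba]
        _ = rexp ((a - b) * x) * ((b - a) * ∫ y in (0:ℝ)..x, rexp ((b - a) * y)) := by ring
    rw [hthis, hI, mul_sub, ← Real.exp_add, mul_one,
      show (a - b) * x + (b - a) * x = 0 by ring, Real.exp_zero]
  rw [smul_eq_mul, smul_eq_mul, e1, e2, ← ENNReal.ofReal_add (by positivity)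
    (by
      have hle : rexp ((a - b) * x) ≤ 1 := by
        rw [Real.exp_le_one_iff]
        nlinarith
      linarith)]
  rw [show rexp ((a - b) * x) + (1 - rexp ((a - b) * x)) = 1 by ring, ENNReal.ofReal_one]

/-- marginal identity : first marginal of the joint is `expMeasure a`. -/
lemma marg {a b : ℝ} (ha : 0 < a) (hab : a ≤ b) :
    (((expMeasure a).prod (mY a b)).withDensity (fD a b)).map Prod.fst = expMeasure a := by
  have hb : 0 < b := ha.trans_le hab
  haveI := isProbabilityMeasure_expMeasure ha
  haveI := mY_finite ha b
  ext s hs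
  rw [Measure.map_apply measurable_fst hs, withDensity_apply _ (measurable_fst hs),
    show (Prod.fst ⁻¹' s : Set (ℝ × ℝ)) = s ×ˢ univ from (prod_univ).symm,
    ← Measure.prod_restrict, Measure.restrict_univ,
    lintegral_prod _ (measurable_fD a b).aemeasurable]
  have hae : ∀ᵐ x ∂(expMeasure a).restrict s,
      ∫⁻ y, fD a b (x, y) ∂(mY a b) = 1 :=
    ae_restrict_of_ae ((ae_pos ha).mono fun x hx => inner_one ha hab hx)
  rw [lintegral_congr_ae hae, setLIntegral_one]

end ExpAux

end ExpAuxSection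

open ExpAux

/-- Let V ~ Exp(mean P) be independent of Y, where Y has law
(P/λ)·δ₀ + (1 − P/λ)·Exp(mean λ), with 0 < P ≤ λ, and set X = Y + V. Then
(i) 0 ≤ Y ≤ X a.s., (ii) E[X − Y] = P, (iii) X ~ Exp(mean λ), and (iv) I(X;Y) = ln(λ/P).
(Here `expMeasure r` is the exponential distribution with rate r, i.e. mean 1/r.) -/
theorem exponential_construction
    {Ω : Type*} [MeasurableSpace Ω] (μ : Measure Ω) [IsProbabilityMeasure μ]
    (lam P : ℝ) (hP : 0 < P) (hPlam : P ≤ lam)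
    (Y V : Ω → ℝ) (hYmeas : Measurable Y) (hVmeas : Measurable V)
    (hIndep : IndepFun Y V μ)
    (hVlaw : μ.map V = ProbabilityTheory.expMeasure (1 / P))
    (hYlaw : μ.map Y
      = (ENNReal.ofReal (P / lam)) • Measure.dirac (0 : ℝ)
        + (ENNReal.ofReal (1 - P / lam)) • ProbabilityTheory.expMeasure (1 / lam)) :
    (∀ᵐ ω ∂μ, 0 ≤ Y ω ∧ Y ω ≤ Y ω + V ω)
    ∧ (∫ ω, ((Y ω + V ω) - Y ω) ∂μ = P)
    ∧ (μ.map (fun ω => Y ω + V ω) = ProbabilityTheory.expMeasure (1 / lam))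
    ∧ mutualInfo μ (fun ω => Y ω + V ω) Y = ENNReal.ofReal (Real.log (lam / P)) := by
  have hlam : 0 < lam := hP.trans_le hPlam
  set a : ℝ := 1 / lam with ha_def
  set b : ℝ := 1 / P with hb_def
  have ha : 0 < a := by positivity
  have hb : 0 < b := by positivity
  have hab : a ≤ b := one_div_le_one_div_of_le hP hPlam
  haveI := isProbabilityMeasure_expMeasure ha
  haveI := isProbabilityMeasure_expMeasure hb
  haveI := mY_finite ha b
  have e_ab : P / lam = a / b := by
    rw [ha_def, hb_def]; field_simp
  -- Y law in `mY` form
  have hY2 : μ.map Y = mY a b := by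
    rw [hYlaw, mY, e_ab]
  -- (i) nonnegativity a.s.
  have hV0 : ∀ᵐ ω ∂μ, 0 ≤ V ω := by
    rw [ae_iff]
    have hset : {ω | ¬ 0 ≤ V ω} = V ⁻¹' (Set.Iio 0) := by
      ext ω; simp [not_le]
    rw [hset, ← Measure.map_apply hVmeas measurableSet_Iio, hVlaw]
    exact measure_mono_null Set.Iio_subset_Iic_self (expMeasure_Iic_zero hb)
  have hY0 : ∀ᵐ ω ∂μ, 0 ≤ Y ω := by
    rw [ae_iff]
    have hset : {ω | ¬ 0 ≤ Y ω} = Y ⁻¹' (Set.Iio 0) := by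
      ext ω; simp [not_le]
    rw [hset, ← Measure.map_apply hYmeas measurableSet_Iio, hY2, mY]
    simp only [Measure.add_apply, Measure.smul_apply, smul_eq_mul]
    rw [Measure.dirac_apply' _ measurableSet_Iio,
      measure_mono_null Set.Iio_subset_Iic_self (expMeasure_Iic_zero ha)]
    simp
  have part1 : ∀ᵐ ω ∂μ, 0 ≤ Y ω ∧ Y ω ≤ Y ω + V ω := by
    filter_upwards [hY0, hV0] with ω h1 h2
    exact ⟨h1, by linarith⟩
  -- integrability of V and its mean
  have hVid : Integrable (fun x : ℝ => x) (μ.map V) := by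
    rw [hVlaw]; exact ExpAux.integrable_id hb
  have hVint : Integrable V μ := by
    have := (integrable_map_measure hVid.aestronglyMeasurable hVmeas.aemeasurable).mp hVid
    exact this
  have hVmean : ∫ ω, V ω ∂μ = P := by
    have h := integral_map (φ := V) hVmeas.aemeasurable
      (f := fun x : ℝ => x) hVid.aestronglyMeasurable
    rw [hVlaw, ExpAux.integral_id hb] at h
    rw [← h, hb_def, one_div_one_div]
  -- part (ii)
  have part2 : ∫ ω, ((Y ω + V ω) - Y ω) ∂μ = P := by
    simp only [add_sub_cancel_left]
    exact hVmean
  -- joint law computations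
  have hpair : Measurable (fun ω => (Y ω, V ω)) := hYmeas.prodMk hVmeas
  have hXmeas : Measurable (fun ω => Y ω + V ω) := hYmeas.add hVmeas
  have hXY : Measurable (fun ω => (Y ω + V ω, Y ω)) := hXmeas.prodMk hYmeas
  have hjointYV : μ.map (fun ω => (Y ω, V ω)) = (mY a b).prod (expMeasure b) := by
    rw [(indepFun_iff_map_prod_eq_prod_map_map hYmeas.aemeasurable
      hVmeas.aemeasurable).mp hIndep, hY2, hVlaw]
  have hJD : μ.map (fun ω => (Y ω + V ω, Y ω))
      = ((expMeasure a).prod (mY a b)).withDensity (fD a b) := by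
    have hcomp : (fun p : ℝ × ℝ => ((T : ℝ × ℝ ≃ᵐ ℝ × ℝ) p)) ∘ (fun ω => (Y ω, V ω))
        = fun ω => (Y ω + V ω, Y ω) := by
      funext ω; simp [T_apply]
    rw [← key ha hb, ← hjointYV, Measure.map_map T.measurable hpair, hcomp]
  -- part (iii)
  have part3 : μ.map (fun ω => Y ω + V ω) = expMeasure a := by
    have hcomp : (Prod.fst : ℝ × ℝ → ℝ) ∘ (fun ω => (Y ω + V ω, Y ω))
        = fun ω => Y ω + V ω := rfl
    rw [← hcomp, ← Measure.map_map measurable_fst hXY, hJD, marg ha hab]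
  -- integrability of X and its mean
  have hXid : Integrable (fun x : ℝ => x) (μ.map (fun ω => Y ω + V ω)) := by
    rw [part3]; exact ExpAux.integrable_id ha
  have hXint : Integrable (fun ω => Y ω + V ω) μ := by
    have := (integrable_map_measure hXid.aestronglyMeasurable hXmeas.aemeasurable).mp hXid
    exact this
  have hXmean : ∫ ω, (Y ω + V ω) ∂μ = lam := by
    have h := integral_map (φ := fun ω => Y ω + V ω) hXmeas.aemeasurable
      (f := fun x : ℝ => x) hXid.aestronglyMeasurable
    rw [part3, ExpAux.integral_id ha] at h
    rw [← h, ha_def, one_div_one_div]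
  -- part (iv)
  refine ⟨part1, part2, part3, ?_⟩
  set mJ : Measure (ℝ × ℝ) := μ.map (fun ω => (Y ω + V ω, Y ω)) with hmJ_def
  set ν : Measure (ℝ × ℝ) := (expMeasure a).prod (mY a b) with hν_def
  haveI : IsFiniteMeasure ν := by
    rw [hν_def]; infer_instance
  have hac : mJ ≪ ν := by
    rw [hJD]
    exact withDensity_absolutelyContinuous _ _
  have hrn : mJ.rnDeriv ν =ᵐ[ν] fD a b := by
    rw [hJD]
    exact Measure.rnDeriv_withDensity _ (measurable_fD a b)
  have hrnmJ : mJ.rnDeriv ν =ᵐ[mJ] fD a b := hac.ae_le hrn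
  have hsupp : ∀ᵐ p ∂mJ, 0 ≤ p.2 ∧ p.2 ≤ p.1 := by
    rw [hmJ_def, ae_map_iff hXY.aemeasurable measurableSet_supp]
    filter_upwards [hY0, hV0] with ω h1 h2
    exact ⟨h1, by simp; linarith⟩
  set G : ℝ × ℝ → ℝ := fun p => Real.log (b / a) + (a * p.1 - b * (p.1 - p.2)) with hG_def
  have hGcont : Continuous G := by
    rw [hG_def]; fun_prop
  have hllr : llr mJ ν =ᵐ[mJ] G := by
    filter_upwards [hrnmJ, hsupp] with p h1 h2
    have hstep : llr mJ ν p = Real.log ((mJ.rnDeriv ν) p).toReal := rfl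
    rw [hstep, h1, fD, ENNReal.toReal_ofReal (F_nonneg ha hb p), F, if_pos h2,
      Real.log_mul (by positivity) (Real.exp_ne_zero _), Real.log_exp, hG_def]
  have hint2 : Integrable (fun ω => a * (Y ω + V ω) - b * V ω) μ :=
    (hXint.const_mul a).sub (hVint.const_mul b)
  have hGint : Integrable G mJ := by
    rw [hmJ_def]
    refine (integrable_map_measure hGcont.aestronglyMeasurable hXY.aemeasurable).mpr ?_
    have hc : (G ∘ fun ω => (Y ω + V ω, Y ω))
        = fun ω => Real.log (b / a) + (a * (Y ω + V ω) - b * V ω) := by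
      funext ω; simp only [Function.comp_apply, hG_def, add_sub_cancel_left]
    rw [hc]
    exact (integrable_const _).add hint2
  have hint : Integrable (llr mJ ν) mJ := hGint.congr hllr.symm
  have hval : ∫ p, llr mJ ν p ∂mJ = Real.log (lam / P) := by
    rw [integral_congr_ae hllr, hmJ_def,
      integral_map hXY.aemeasurable hGcont.aestronglyMeasurable]
    have hfun : (fun ω => G (Y ω + V ω, Y ω))
        = fun ω => Real.log (b / a) + (a * (Y ω + V ω) - b * V ω) := by
      funext ω; simp only [hG_def, add_sub_cancel_left]
    rw [hfun, integral_add (integrable_const _) hint2,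
      integral_sub (hXint.const_mul a) (hVint.const_mul b),
      integral_const_mul, integral_const_mul, hXmean, hVmean, integral_const]
    have h1 : a * lam = 1 := by rw [ha_def]; field_simp
    have h2 : b * P = 1 := by rw [hb_def]; field_simp
    have h3 : b / a = lam / P := by rw [ha_def, hb_def]; field_simp
    rw [h1, h2, h3]
    simp
  show klDiv mJ ((μ.map (fun ω => Y ω + V ω)).prod (μ.map Y)) = ENNReal.ofReal (Real.log (lam / P))
  rw [part3, hY2, ← hν_def, klDiv, if_pos ⟨hac, hint⟩, hval]
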